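/- Let D > 0 and ν > 0. Suppose (ε_n) is a sequence of positive numbers tending to 0, (λ_n) ⊂ ℂ with Re λ_n > −ν for all n, (ψ_n) ⊂ H¹((0,1); ℂ) with ‖ψ_n‖_{L²} = 1, and a_n, b_n, a* : (0,1) → ℝ are measurable with sup_n (‖a_n‖_{L^∞} + ‖b_n‖_{L^∞}) < ∞, ‖a*‖_{L^∞} < ∞, and a*(x) ≤ −2ν for almost every x (so that |a*(x) − λ_n| ≥ ν). Assume the identity λ_n = −D ∫₀¹ |ψ_n'|² dx − ∫₀¹ b_n |ψ_n|² dx + ∫₀¹ ( a_n b_n / (a* − λ_n) ) |ψ_n|² dx + r_n holds with r_n → 0 as n → ∞. Then the sequence (λ_n) is bounded: there exists R > 0, independent of n, with |λ_n| ≤ R for all n. -/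

import Mathlib

open Set Filter MeasureTheory

/-- **Boundedness of eigenvalues** (Lemma 3.2 of the paper): if normalized
`H¹` functions `ψ_n` and complex numbers `λ_n` with `Re λ_n > −ν` satisfy
the reduced eigenvalue identity
`λ_n = −D∫₀¹|ψ_n'|² − ∫₀¹ b_n|ψ_n|² + ∫₀¹ (a_n b_n/(a* − λ_n))|ψ_n|² + r_n`
with uniformly bounded coefficients, `a* ≤ −2ν` a.e. and `r_n → 0`, then the
sequence `(λ_n)` is bounded. -/
theorem eigenvalue_boundedness
    (D ν : ℝ) (hD : 0 < D) (hν : 0 < ν)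
    (ε : ℕ → ℝ) (hεpos : ∀ n, 0 < ε n) (hεlim : Tendsto ε atTop (nhds 0))
    (lam : ℕ → ℂ) (hlam : ∀ n, -ν < (lam n).re)
    (ψ : ℕ → ℝ → ℂ)
    (hψcont : ∀ n, ContinuousOn (ψ n) (Icc 0 1))
    (hψdiff : ∀ n, DifferentiableOn ℝ (ψ n) (Ioo 0 1))
    (hψH1 : ∀ n, IntegrableOn (fun x => ‖deriv (ψ n) x‖ ^ 2) (Ioo 0 1))
    (hψnorm : ∀ n, (∫ x in (0:ℝ)..1, ‖ψ n x‖ ^ 2) = 1)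
    (a b : ℕ → ℝ → ℝ) (astar : ℝ → ℝ)
    (hameas : ∀ n, Measurable (a n)) (hbmeas : ∀ n, Measurable (b n))
    (hastarmeas : Measurable astar)
    (hbound : ∃ C : ℝ, ∀ n, ∀ x ∈ Ioo (0:ℝ) 1, |a n x| ≤ C ∧ |b n x| ≤ C)
    (hastarbound : ∃ C : ℝ, ∀ x ∈ Ioo (0:ℝ) 1, |astar x| ≤ C)
    (hastarneg : ∀ᵐ x ∂(volume.restrict (Ioo (0:ℝ) 1)), astar x ≤ -2 * ν)
    (r : ℕ → ℂ) (hr : Tendsto r atTop (nhds 0))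
    (hidentity : ∀ n, lam n
      = -(D : ℂ) * (∫ x in (0:ℝ)..1, ((‖deriv (ψ n) x‖ ^ 2 : ℝ) : ℂ))
        - (∫ x in (0:ℝ)..1, ((b n x : ℂ) * ((‖ψ n x‖ ^ 2 : ℝ) : ℂ)))
        + (∫ x in (0:ℝ)..1,
            ((a n x : ℂ) * (b n x : ℂ) / ((astar x : ℂ) - lam n))
              * ((‖ψ n x‖ ^ 2 : ℝ) : ℂ))
        + r n) :
    ∃ R > (0:ℝ), ∀ n, ‖lam n‖ ≤ R := by
  obtain ⟨C, hC⟩ := hbound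
  have hC0 : 0 ≤ C := (abs_nonneg _).trans (hC 0 (1/2) ⟨by norm_num, by norm_num⟩).1
  -- bound on r
  obtain ⟨M, hM⟩ : ∃ M : ℝ, ∀ n, ‖r n‖ ≤ M := by
    have h := (hr.norm).bddAbove_range
    obtain ⟨M, hM⟩ := h
    exact ⟨M, fun n => hM ⟨n, rfl⟩⟩
  have hM0 : 0 ≤ M := (norm_nonneg (r 0)).trans (hM 0)
  -- notation
  set g : ℕ → ℝ → ℝ := fun n x => ‖ψ n x‖ ^ 2 with hg
  have hgcont : ∀ n, ContinuousOn (g n) (Icc 0 1) := fun n => ((hψcont n).norm).pow 2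
  have hgint : ∀ n, IntervalIntegrable (g n) volume 0 1 := fun n =>
    (hgcont n).intervalIntegrable_of_Icc (by norm_num)
  have hg0 : ∀ n x, 0 ≤ g n x := fun n x => sq_nonneg _
  -- a.e. membership in Ioo on the restricted measure to Ioc
  have hmem : ∀ᵐ x ∂volume.restrict (Ioc (0:ℝ) 1), x ∈ Ioo (0:ℝ) 1 := by
    rw [← Measure.restrict_congr_set Ioo_ae_eq_Ioc]
    exact ae_restrict_mem measurableSet_Ioo
  have hstar' : ∀ᵐ x ∂volume.restrict (Ioc (0:ℝ) 1), astar x ≤ -2 * ν := by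
    rw [← Measure.restrict_congr_set Ioo_ae_eq_Ioc]
    exact hastarneg
  -- bound on the zeroth-order term
  have hT2 : ∀ n, ‖∫ x in (0:ℝ)..1, ((b n x : ℂ) * ((g n x : ℝ) : ℂ))‖ ≤ C := by
    intro n
    have h1 : ‖∫ x in (0:ℝ)..1, ((b n x : ℂ) * ((g n x : ℝ) : ℂ))‖
        ≤ |∫ x in (0:ℝ)..1, C * g n x| := by
      apply intervalIntegral.norm_integral_le_abs_of_norm_le
      · rw [uIoc_of_le (by norm_num : (0:ℝ) ≤ 1)]
        filter_upwards [hmem] with x hx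
        have : ‖((b n x : ℂ) * ((g n x : ℝ) : ℂ))‖ = |b n x| * g n x := by
          rw [norm_mul, Complex.norm_real, Complex.norm_real, Real.norm_eq_abs,
            Real.norm_eq_abs, abs_of_nonneg (hg0 n x)]
        rw [this]
        exact mul_le_mul_of_nonneg_right (hC n x hx).2 (hg0 n x)
      · exact (hgint n).const_mul C
    calc _ ≤ |∫ x in (0:ℝ)..1, C * g n x| := h1
      _ = C := by rw [intervalIntegral.integral_const_mul, hψnorm n, mul_one, abs_of_nonneg hC0]
  -- bound on the nonlocal term
  have hT3 : ∀ n, ‖∫ x in (0:ℝ)..1,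
      ((a n x : ℂ) * (b n x : ℂ) / ((astar x : ℂ) - lam n)) * ((g n x : ℝ) : ℂ)‖
      ≤ C * C / ν := by
    intro n
    have h1 : ‖∫ x in (0:ℝ)..1,
        ((a n x : ℂ) * (b n x : ℂ) / ((astar x : ℂ) - lam n)) * ((g n x : ℝ) : ℂ)‖
        ≤ |∫ x in (0:ℝ)..1, (C * C / ν) * g n x| := by
      apply intervalIntegral.norm_integral_le_abs_of_norm_le
      · rw [uIoc_of_le (by norm_num : (0:ℝ) ≤ 1)]
        filter_upwards [hmem, hstar'] with x hx hsx
        have hden : ν ≤ ‖(astar x : ℂ) - lam n‖ := by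
          have h2 : ((astar x : ℂ) - lam n).re = astar x - (lam n).re := by simp
          have h3 : astar x - (lam n).re ≤ -ν := by
            have := hlam n; linarith
          calc ν ≤ |((astar x : ℂ) - lam n).re| := by
                rw [h2, abs_of_nonpos (by linarith)]; linarith
            _ ≤ ‖(astar x : ℂ) - lam n‖ := Complex.abs_re_le_norm _
        have hnum : ‖(a n x : ℂ) * (b n x : ℂ)‖ ≤ C * C := by
          rw [norm_mul, Complex.norm_real, Complex.norm_real, Real.norm_eq_abs,
            Real.norm_eq_abs]
          exact mul_le_mul (hC n x hx).1 (hC n x hx).2 (abs_nonneg _) hC0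
        have : ‖((a n x : ℂ) * (b n x : ℂ) / ((astar x : ℂ) - lam n)) * ((g n x : ℝ) : ℂ)‖
            = ‖(a n x : ℂ) * (b n x : ℂ)‖ / ‖(astar x : ℂ) - lam n‖ * g n x := by
          rw [norm_mul, norm_div, Complex.norm_real, Real.norm_eq_abs,
            abs_of_nonneg (hg0 n x)]
        rw [this]
        refine mul_le_mul_of_nonneg_right ?_ (hg0 n x)
        exact div_le_div₀ (by positivity) hnum hν hden
      · exact (hgint n).const_mul _
    calc _ ≤ |∫ x in (0:ℝ)..1, (C * C / ν) * g n x| := h1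
      _ = C * C / ν := by
        rw [intervalIntegral.integral_const_mul, hψnorm n, mul_one,
          abs_of_nonneg (by positivity)]
  -- the gradient term is a nonnegative real
  have hI1int : ∀ n, IntervalIntegrable (fun x => ‖deriv (ψ n) x‖ ^ 2) volume 0 1 := by
    intro n
    rw [intervalIntegrable_iff_integrableOn_Ioc_of_le (by norm_num : (0:ℝ) ≤ 1)]
    exact (hψH1 n).congr_set_ae Ioo_ae_eq_Ioc.symm
  set I1 : ℕ → ℝ := fun n => ∫ x in (0:ℝ)..1, ‖deriv (ψ n) x‖ ^ 2 with hI1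
  have hI1nonneg : ∀ n, 0 ≤ I1 n := fun n =>
    intervalIntegral.integral_nonneg (by norm_num) (fun x _ => sq_nonneg _)
  have hcast : ∀ n, (∫ x in (0:ℝ)..1, ((‖deriv (ψ n) x‖ ^ 2 : ℝ) : ℂ)) = ((I1 n : ℝ) : ℂ) := by
    intro n; rw [hI1]; exact intervalIntegral.integral_ofReal
  -- rewrite the identity
  set rest : ℕ → ℂ := fun n =>
    -(∫ x in (0:ℝ)..1, ((b n x : ℂ) * ((g n x : ℝ) : ℂ)))
    + (∫ x in (0:ℝ)..1,
        ((a n x : ℂ) * (b n x : ℂ) / ((astar x : ℂ) - lam n)) * ((g n x : ℝ) : ℂ))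
    + r n with hrest
  have hid : ∀ n, lam n = -(D : ℂ) * ((I1 n : ℝ) : ℂ) + rest n := by
    intro n
    rw [hidentity n, hcast n, hrest]
    ring
  have hrestbound : ∀ n, ‖rest n‖ ≤ C + C * C / ν + M := by
    intro n
    calc ‖rest n‖ ≤ ‖-(∫ x in (0:ℝ)..1, ((b n x : ℂ) * ((g n x : ℝ) : ℂ)))
          + (∫ x in (0:ℝ)..1,
            ((a n x : ℂ) * (b n x : ℂ) / ((astar x : ℂ) - lam n)) * ((g n x : ℝ) : ℂ))‖
          + ‖r n‖ := norm_add_le _ _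
      _ ≤ (‖-(∫ x in (0:ℝ)..1, ((b n x : ℂ) * ((g n x : ℝ) : ℂ)))‖
          + ‖(∫ x in (0:ℝ)..1,
            ((a n x : ℂ) * (b n x : ℂ) / ((astar x : ℂ) - lam n)) * ((g n x : ℝ) : ℂ))‖)
          + ‖r n‖ := by gcongr; exact norm_add_le _ _
      _ ≤ (C + C * C / ν) + M := by
          gcongr
          · rw [norm_neg]; exact hT2 n
          · exact hT3 n
          · exact hM n
  -- real part gives control of the gradient term
  have hgrad : ∀ n, D * I1 n ≤ ν + ‖rest n‖ := by
    intro n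
    have h1 : (lam n).re = -D * I1 n + (rest n).re := by
      rw [hid n]; simp
    have h2 : -ν < -D * I1 n + (rest n).re := h1 ▸ hlam n
    have h3 : (rest n).re ≤ ‖rest n‖ := by
      exact Complex.re_le_norm _
    linarith
  refine ⟨ν + 2 * (C + C * C / ν + M) + 1, by positivity, fun n => ?_⟩
  have h4 : ‖lam n‖ ≤ D * I1 n + ‖rest n‖ := by
    rw [hid n]
    calc ‖-(D : ℂ) * ((I1 n : ℝ) : ℂ) + rest n‖
        ≤ ‖-(D : ℂ) * ((I1 n : ℝ) : ℂ)‖ + ‖rest n‖ := norm_add_le _ _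
      _ = D * I1 n + ‖rest n‖ := by
          rw [norm_mul, norm_neg, Complex.norm_real, Complex.norm_real, Real.norm_eq_abs,
            Real.norm_eq_abs, abs_of_pos hD, abs_of_nonneg (hI1nonneg n)]
  calc ‖lam n‖ ≤ D * I1 n + ‖rest n‖ := h4
    _ ≤ (ν + ‖rest n‖) + ‖rest n‖ := by gcongr; exact hgrad n
    _ ≤ ν + 2 * (C + C * C / ν + M) + 1 := by
        have := hrestbound n; linarith
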